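/- Let X = V(f) ⊂ P^n be a hyperplane (d = 1) with n ≥ 2. Then for each j with 1−n ≤ j ≤ 0, the invariant ρ(O_X(j)) = Σ_{r=0}^n Σ_i h^i(P^n, i_*O_X(j) ⊗ Ω^r_{P^n}(r)) equals 2, which is strictly less than 2^{⌊n/2⌋+1}. -/
import Mathlib


/-- `IsBottCohomology n h` says that `h q p ℓ` is the dimension of the sheaf cohomology
`H^q(ℙⁿ_k, Ω^p_{ℙⁿ}(ℓ))` of the twisted sheaves of differential `p`-forms on projective
`n`-space, as given by the Bott formula (which characterizes these dimensions):
`h^q(Ωᵖ(ℓ)) = C(ℓ+n−p, ℓ)·C(ℓ−1, p)` if `q = 0, ℓ > p`; `1` if `ℓ = 0, q = p`;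
`C(p−ℓ, −ℓ)·C(−ℓ−1, n−p)` if `q = n, ℓ < p − n`; and `0` otherwise. -/
def IsBottCohomology (n : ℕ) (h : ℕ → ℕ → ℤ → ℕ) : Prop :=
  ∀ q p : ℕ, p ≤ n → ∀ ℓ : ℤ,
    h q p ℓ =
      if q = 0 ∧ (p : ℤ) < ℓ then
        Nat.choose (ℓ + n - p).toNat ℓ.toNat * Nat.choose (ℓ - 1).toNat p
      else if ℓ = 0 ∧ q = p then 1
      else if q = n ∧ ℓ < (p : ℤ) - n then
        Nat.choose ((p : ℤ) - ℓ).toNat (-ℓ).toNat * Nat.choose (-ℓ - 1).toNat (n - p)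
      else 0

/-- The long exact cohomology sequence, at the level of dimensions: a sequence of
finite-dimensional spaces `0 → D 0 → D 1 → D 2 → ⋯` is exact iff there are ranks
`rk j` (of the maps) with `rk 0 = 0` and `dim (D j) = rk j + rk (j+1)` for all `j`. -/
def ExactDims (D : ℕ → ℕ) : Prop :=
  ∃ rk : ℕ → ℕ, rk 0 = 0 ∧ ∀ j, D j = rk j + rk (j + 1)

/-- Let `X = V(f) ⊂ ℙⁿ` be a hyperplane (`d = 1`) with `n ≥ 2`, and let
`hX j q r = h^q(ℙⁿ, i_*O_X(j) ⊗ Ω^r_{ℙⁿ}(r))`.  Given the Bott formula for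
`h q p ℓ = h^q(ℙⁿ, Ωᵖ(ℓ))` and the long exact cohomology sequences induced by
`0 → Ω^r(r−1+j) → Ω^r(r+j) → i_*O_X(j) ⊗ Ω^r(r) → 0`, for every `1−n ≤ j ≤ 0` one has
`ρ(O_X(j)) = ∑_{r=0}^n ∑_q hX j q r = 2 < 2^{⌊n/2⌋+1}`. -/
theorem rho_line_bundles_on_hyperplane (n : ℕ) (hn : 2 ≤ n)
    (h : ℕ → ℕ → ℤ → ℕ) (hBott : IsBottCohomology n h)
    (hX : ℤ → ℕ → ℕ → ℕ)
    (hLES : ∀ j : ℤ, ∀ r ≤ n, ExactDims fun m =>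
      if m % 3 = 0 then h (m / 3) r ((r : ℤ) - 1 + j)
      else if m % 3 = 1 then h (m / 3) r ((r : ℤ) + j)
      else hX j (m / 3) r)
    (j : ℤ) (hj0 : 1 - (n : ℤ) ≤ j) (hj1 : j ≤ 0) :
    ∑ r ∈ Finset.range (n + 1), ∑ q ∈ Finset.range (n + 1), hX j q r = 2 ∧
    2 < 2 ^ (n / 2 + 1) := by
  -- Bott values at the relevant twists
  have h0 : ∀ r ≤ n, ∀ q : ℕ, h q r ((r : ℤ) - 1 + j)
      = if (r : ℤ) - 1 + j = 0 ∧ q = r then 1 else 0 := by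
    intro r hr q
    rw [hBott q r hr]
    split_ifs <;> omega
  have h1 : ∀ r ≤ n, ∀ q : ℕ, h q r ((r : ℤ) + j)
      = if (r : ℤ) + j = 0 ∧ q = r then 1 else 0 := by
    intro r hr q
    rw [hBott q r hr]
    split_ifs <;> omega
  -- compute hX from the long exact sequences
  have hXval : ∀ r ≤ n, ∀ q : ℕ, hX j q r
      = if (q : ℤ) = -j ∧ ((r : ℤ) = -j ∨ (r : ℤ) = 1 - j) then 1 else 0 := by
    intro r hr q
    obtain ⟨rk, hrk0, hrk⟩ := hLES j r hr
    have key : ∀ m : ℕ, (if m % 3 = 0 then h (m / 3) r ((r : ℤ) - 1 + j)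
        else if m % 3 = 1 then h (m / 3) r ((r : ℤ) + j)
        else hX j (m / 3) r) = rk m + rk (m + 1) := hrk
    have eA : ∀ Q : ℕ, (if (r : ℤ) - 1 + j = 0 ∧ Q = r then 1 else 0)
        = rk (3 * Q) + rk (3 * Q + 1) := by
      intro Q
      have t := key (3 * Q)
      rw [if_pos (by omega : (3 * Q) % 3 = 0), (by omega : (3 * Q) / 3 = Q),
        h0 r hr Q] at t
      exact t
    have eB : ∀ Q : ℕ, (if (r : ℤ) + j = 0 ∧ Q = r then 1 else 0)
        = rk (3 * Q + 1) + rk (3 * Q + 2) := by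
      intro Q
      have t := key (3 * Q + 1)
      rw [if_neg (by omega : ¬ (3 * Q + 1) % 3 = 0),
        if_pos (by omega : (3 * Q + 1) % 3 = 1), (by omega : (3 * Q + 1) / 3 = Q),
        h1 r hr Q, (by omega : 3 * Q + 1 + 1 = 3 * Q + 2)] at t
      exact t
    have eC : hX j q r = rk (3 * q + 2) + rk (3 * q + 3) := by
      have t := key (3 * q + 2)
      rw [if_neg (by omega : ¬ (3 * q + 2) % 3 = 0),
        if_neg (by omega : ¬ (3 * q + 2) % 3 = 1), (by omega : (3 * q + 2) / 3 = q),
        (by omega : 3 * q + 2 + 1 = 3 * q + 3)] at t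
      exact t
    have eA1 := eA (q + 1)
    have eB1 := eB (q + 1)
    rw [(by ring : 3 * (q + 1) + 1 = 3 * q + 4), (by ring : 3 * (q + 1) = 3 * q + 3)] at eA1
    rw [(by ring : 3 * (q + 1) + 2 = 3 * q + 5), (by ring : 3 * (q + 1) + 1 = 3 * q + 4)] at eB1
    have eAq := eA q
    have eBq := eB q
    rw [eC]
    split_ifs at eA1 eB1 eAq eBq ⊢ <;> omega
  have r0def : (((-j).toNat : ℤ)) = -j := Int.toNat_of_nonneg (by omega)
  set r0 := (-j).toNat with hr0
  have hr0n : r0 + 1 ≤ n := by omega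
  constructor
  · have inner : ∀ r ≤ n, ∑ q ∈ Finset.range (n + 1), hX j q r
        = if r = r0 ∨ r = r0 + 1 then 1 else 0 := by
      intro r hr
      have step : ∀ q ∈ Finset.range (n + 1), hX j q r
          = if q = r0 ∧ (r = r0 ∨ r = r0 + 1) then 1 else 0 := by
        intro q _
        rw [hXval r hr q]
        split_ifs <;> omega
      rw [Finset.sum_congr rfl step]
      by_cases hc : r = r0 ∨ r = r0 + 1
      · simp only [hc, and_true]
        rw [Finset.sum_ite_eq' (Finset.range (n + 1)) r0 (fun _ => 1)]
        rw [if_pos (Finset.mem_range.mpr (by omega))]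
        simp
      · simp [hc]
    rw [Finset.sum_congr rfl
      (fun r hrm => inner r (Finset.mem_range_succ_iff.mp hrm))]
    have split2 : ∀ r ∈ Finset.range (n + 1),
        (if r = r0 ∨ r = r0 + 1 then (1 : ℕ) else 0)
        = (if r = r0 then 1 else 0) + (if r = r0 + 1 then 1 else 0) := by
      intro r _
      split_ifs <;> omega
    rw [Finset.sum_congr rfl split2, Finset.sum_add_distrib,
      Finset.sum_ite_eq' (Finset.range (n + 1)) r0 (fun _ => 1),
      Finset.sum_ite_eq' (Finset.range (n + 1)) (r0 + 1) (fun _ => 1),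
      if_pos (Finset.mem_range.mpr (by omega)),
      if_pos (Finset.mem_range.mpr (by omega))]
  · calc (2 : ℕ) < 2 ^ 2 := by norm_num
      _ ≤ 2 ^ (n / 2 + 1) := Nat.pow_le_pow_right (by norm_num) (by omega)
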